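/- Let λ > 0, μ > 0 and u < v, set w = (1/2)√(λ+μ)·(v−u), C_0 = (1,0)ᵀ, γ_0 = −(μ/(λ√(λ+μ)))·e^{−√λ u}·sinh w/(√λ·cosh w + √(λ+μ)·sinh w), and A_1 = γ_0·M(u)^{−1}N(u)C_0 + (μ/(λ(λ+μ)))·M(u)^{−1}C_0. Then for every x ∈ ℝ, the first entry of the vector M(x)·A_1 equals (μ/(√λ·(λ+μ)))·cosh(√(λ+μ)·(x−(u+v)/2))/(√λ·cosh w + √(λ+μ)·sinh w). -/

import Mathlib

open Matrix Real

/-- Explicit inverse of `Nmat`. -/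
theorem Nmat_inv_aux (lam x : ℝ) (hlam : 0 < lam) :
    (!![Real.exp (Real.sqrt lam * x), Real.exp (-(Real.sqrt lam * x));
       Real.sqrt lam * Real.exp (Real.sqrt lam * x),
         -(Real.sqrt lam * Real.exp (-(Real.sqrt lam * x)))] : Matrix (Fin 2) (Fin 2) ℝ)⁻¹ =
      !![Real.exp (-(Real.sqrt lam * x)) / 2,
           Real.exp (-(Real.sqrt lam * x)) / (2 * Real.sqrt lam);
         Real.exp (Real.sqrt lam * x) / 2,
           -(Real.exp (Real.sqrt lam * x) / (2 * Real.sqrt lam))] := by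
  have hs : 0 < Real.sqrt lam := Real.sqrt_pos.mpr hlam
  have h1 : rexp (Real.sqrt lam * x) * rexp (-(Real.sqrt lam * x)) = 1 := by
    rw [← Real.exp_add]; simp
  apply Matrix.inv_eq_right_inv
  ext i j
  fin_cases i <;> fin_cases j <;>
    simp [Matrix.mul_apply, Fin.sum_univ_two] <;>
    field_simp <;> nlinarith [h1, hs]

/-- The fundamental matrix `N(x)` associated with parameter `λ`:
`N(x) = ((e^{√λ x}, e^{−√λ x}), (√λ e^{√λ x}, −√λ e^{−√λ x}))`.
The matrix `M(x)` of the paper is `Nmat (λ+μ) x`. -/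
noncomputable def Nmat (lam x : ℝ) : Matrix (Fin 2) (Fin 2) ℝ :=
  !![Real.exp (Real.sqrt lam * x), Real.exp (-(Real.sqrt lam * x));
     Real.sqrt lam * Real.exp (Real.sqrt lam * x),
       -(Real.sqrt lam * Real.exp (-(Real.sqrt lam * x)))]

theorem Nmat_inv (lam x : ℝ) (hlam : 0 < lam) :
    (Nmat lam x)⁻¹ =
      !![Real.exp (-(Real.sqrt lam * x)) / 2,
           Real.exp (-(Real.sqrt lam * x)) / (2 * Real.sqrt lam);
         Real.exp (Real.sqrt lam * x) / 2,
           -(Real.exp (Real.sqrt lam * x) / (2 * Real.sqrt lam))] :=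
  Nmat_inv_aux lam x hlam

set_option maxHeartbeats 1000000 in
/-- with `w = ½√(λ+μ)(v−u)`, `γ₀` as in the single-interval case and
`A₁ = γ₀ M(u)⁻¹N(u)C₀ + (μ/(λ(λ+μ))) M(u)⁻¹C₀`, the first entry of `M(x)A₁` equals
`(μ/(√λ(λ+μ))) cosh(√(λ+μ)(x−(u+v)/2)) / (√λ cosh w + √(λ+μ) sinh w)`. -/
theorem statement11 (lam mu u v : ℝ) (hlam : 0 < lam) (hmu : 0 < mu) (huv : u < v)
    (w : ℝ) (hw : w = (1 / 2) * (Real.sqrt (lam + mu) * (v - u)))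
    (γ₀ : ℝ)
    (hγ₀ : γ₀ = -(mu / (lam * Real.sqrt (lam + mu))) *
      (Real.exp (-(Real.sqrt lam * u)) * Real.sinh w /
        (Real.sqrt lam * Real.cosh w + Real.sqrt (lam + mu) * Real.sinh w)))
    (A₁ : Fin 2 → ℝ)
    (hA₁ : A₁ = γ₀ • ((Nmat (lam + mu) u)⁻¹ * Nmat lam u).mulVec ![1, 0] +
      (mu / (lam * (lam + mu))) • (Nmat (lam + mu) u)⁻¹.mulVec ![1, 0]) :
    ∀ x : ℝ, ((Nmat (lam + mu) x).mulVec A₁) 0 =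
      mu / (Real.sqrt lam * (lam + mu)) *
        (Real.cosh (Real.sqrt (lam + mu) * (x - (u + v) / 2)) /
          (Real.sqrt lam * Real.cosh w + Real.sqrt (lam + mu) * Real.sinh w)) := by
  intro x
  have hlm : 0 < lam + mu := by linarith
  rw [Nmat_inv (lam + mu) u hlm] at hA₁
  subst hγ₀
  have hw0 : 0 < w := by
    have h0 : 0 < v - u := by linarith
    have := Real.sqrt_pos.mpr hlm
    rw [hw]; positivity
  have e1 : Real.sqrt (lam + mu) * (x - (u + v) / 2)
      = Real.sqrt (lam + mu) * x - (Real.sqrt (lam + mu) * u + w) := by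
    rw [hw]; ring
  clear hw
  set R := Real.sqrt lam with hR
  set S := Real.sqrt (lam + mu) with hS
  have hr : 0 < R := Real.sqrt_pos.mpr hlam
  have hs : 0 < S := Real.sqrt_pos.mpr hlm
  have hr2 : R ^ 2 = lam := Real.sq_sqrt hlam.le
  have hs2 : S ^ 2 = lam + mu := Real.sq_sqrt hlm.le
  clear_value R S
  clear hR hS
  subst hr2
  have hmu2 : mu = S ^ 2 - R ^ 2 := by linarith
  subst hmu2
  have hsq1 : Real.sqrt (R ^ 2) = R := Real.sqrt_sq hr.le
  have hsq3 : Real.sqrt (S ^ 2) = S := Real.sqrt_sq hs.le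
  have hsq2 : Real.sqrt (R ^ 2 + (S ^ 2 - R ^ 2)) = S := by
    rw [show R ^ 2 + (S ^ 2 - R ^ 2) = S ^ 2 by ring]; exact hsq3
  have hRS : R ^ 2 + (S ^ 2 - R ^ 2) = S ^ 2 := by ring
  set D := R * Real.cosh w + S * Real.sinh w with hD
  have hD0 : 0 < D := by
    have h1 := Real.cosh_pos (x := w)
    have h2 := Real.sinh_pos_iff.mpr hw0
    rw [hD]; positivity
  -- closed forms for the entries of A₁
  have h0 : A₁ 0 = (S ^ 2 - R ^ 2) * rexp (-(S * u)) * rexp (-w) / (2 * R * S ^ 2 * D) := by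
    rw [hA₁]
    simp only [Nmat, Matrix.mulVec, Matrix.mul_apply, Fin.sum_univ_two, dotProduct,
      Matrix.cons_val', Matrix.cons_val_zero, Matrix.cons_val_one, Matrix.head_cons,
      Matrix.empty_val', Matrix.cons_val_fin_one, Matrix.head_fin_const, Pi.add_apply,
      Pi.smul_apply, smul_eq_mul, Matrix.cons_mulVec, Matrix.of_apply, hsq1, hsq2, hRS]
    have hDne := hD0.ne'
    rw [hD] at hDne ⊢
    simp only [Real.cosh_eq, Real.sinh_eq, Real.exp_neg] at hDne ⊢
    field_simp at hDne
    have hDne2 : R * (rexp w ^ 2 + 1) + S * (rexp w ^ 2 - 1) ≠ 0 := fun h => hDne (by rw [h, zero_div])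
    field_simp [hDne2]
    ring
  have h1 : A₁ 1 = (S ^ 2 - R ^ 2) * rexp (S * u) * rexp w / (2 * R * S ^ 2 * D) := by
    rw [hA₁]
    simp only [Nmat, Matrix.mulVec, Matrix.mul_apply, Fin.sum_univ_two, dotProduct,
      Matrix.cons_val', Matrix.cons_val_zero, Matrix.cons_val_one, Matrix.head_cons,
      Matrix.empty_val', Matrix.cons_val_fin_one, Matrix.head_fin_const, Pi.add_apply,
      Pi.smul_apply, smul_eq_mul, Matrix.cons_mulVec, Matrix.of_apply, hsq1, hsq2, hRS]
    have hDne := hD0.ne'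
    rw [hD] at hDne ⊢
    simp only [Real.cosh_eq, Real.sinh_eq, Real.exp_neg] at hDne ⊢
    field_simp at hDne
    have hDne2 : R * (rexp w ^ 2 + 1) + S * (rexp w ^ 2 - 1) ≠ 0 := fun h => hDne (by rw [h, zero_div])
    field_simp [hDne2]
    ring
  clear_value D
  -- now the main computation, with D opaque
  have hM : ((Nmat (R ^ 2 + (S ^ 2 - R ^ 2)) x).mulVec A₁) 0
      = rexp (S * x) * A₁ 0 + rexp (-(S * x)) * A₁ 1 := by
    simp [Nmat, Matrix.mulVec, dotProduct, Fin.sum_univ_two, hsq2, hsq3, hRS]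
  rw [hM, h0, h1, hRS, e1]
  rw [Real.cosh_eq]
  simp only [Real.exp_sub, Real.exp_add, Real.exp_neg]
  field_simp
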